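/- Define c_{mn} recursively by c_{-1,-1} = 0, c_{-1,k} = c_{k,-1} = 1 for k ≥ 0, and c_{mn} = Σ_{i=0}^m Σ_{j=0}^n z̃^{mn}_{ij} c_{i-1,j-1}, where z̃^{mn}_{ij} = π_i^m π_j^n for 0 ≤ i ≤ m < j ≤ n, z̃^{mn}_{ii} = π_i^n for 0 ≤ i ≤ m, and z̃^{mn}_{ij} = 0 otherwise. Then the plan z̃^{mn} is a feasible transport plan between π^m and π^n, and consequently d_{mn} ≤ c_{mn} for all m, n. -/

import Mathlib

open Finset

/-- `kmPi α i n` is `π_i^n = α_i ∏_{k=i+1}^n (1 - α_k)` (empty product = 1). -/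
noncomputable def kmPi (α : ℕ → ℝ) (i n : ℕ) : ℝ :=
  α i * ∏ k ∈ Finset.Icc (i + 1) n, (1 - α k)
/-- A feasible transport plan between the probability vectors `π^m` and `π^n`. -/
def IsPlan (α : ℕ → ℝ) (m n : ℕ) (z : ℕ → ℕ → ℝ) : Prop :=
  (∀ i ≤ m, ∀ j ≤ n, 0 ≤ z i j) ∧
  (∀ i ≤ m, ∑ j ∈ Finset.range (n + 1), z i j = kmPi α i m) ∧
  (∀ j ≤ n, ∑ i ∈ Finset.range (m + 1), z i j = kmPi α j n)

/-- Transport cost `Σ_{i=0}^m Σ_{j=0}^n z_{ij} d_{i-1,j-1}`, where indices of `D` are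
shifted by one: `D i j` stands for `d_{i-1,j-1}`. -/
noncomputable def planCost (D : ℕ → ℕ → ℝ) (m n : ℕ) (z : ℕ → ℕ → ℝ) : ℝ :=
  ∑ i ∈ Finset.range (m + 1), ∑ j ∈ Finset.range (n + 1), z i j * D i j

/-- `D : ℕ → ℕ → ℝ` encodes the family `d_{mn}` for `m, n ∈ {-1,0,1,...}` with indices
shifted by one: `D (m+1) (n+1) = d_{m,n}`, `D 0 (k+1) = d_{-1,k}`, etc.  It is the
recursive optimal-transport family: boundary values `d_{-1,-1} = 0`,
`d_{-1,k} = d_{k,-1} = 1`, and `d_{mn}` is the minimum transport cost between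
`π^m` and `π^n` (the minimum, i.e. attained greatest lower bound). -/
def IsKMDist (α : ℕ → ℝ) (D : ℕ → ℕ → ℝ) : Prop :=
  D 0 0 = 0 ∧ (∀ k : ℕ, D 0 (k + 1) = 1) ∧ (∀ k : ℕ, D (k + 1) 0 = 1) ∧
  ∀ m n : ℕ,
    IsLeast {c : ℝ | ∃ z : ℕ → ℕ → ℝ, IsPlan α m n z ∧ c = planCost D m n z}
      (D (m + 1) (n + 1))
/-- The sub-optimal product transport plan between `π^m` and `π^n` (for `m ≤ n`):
`z̃_{ii} = π_i^n` for `i ≤ m`, `z̃_{ij} = π_i^m π_j^n` for `i ≤ m < j ≤ n`, else `0`. -/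
noncomputable def ztilde (α : ℕ → ℝ) (m n : ℕ) (i j : ℕ) : ℝ :=
  if i = j ∧ i ≤ m then kmPi α i n
  else if i ≤ m ∧ m < j ∧ j ≤ n then kmPi α i m * kmPi α j n
  else 0


section aux

variable {α : ℕ → ℝ}

lemma alpha_nonneg (hα0 : α 0 = 1) (hα : ∀ n, 1 ≤ n → α n ∈ Set.Ioo (0 : ℝ) 1) (k : ℕ) :
    0 ≤ α k := by
  cases k with
  | zero => rw [hα0]; norm_num
  | succ k => exact (hα _ (Nat.succ_le_succ (Nat.zero_le _))).1.le

lemma one_sub_alpha_nonneg (hα0 : α 0 = 1) (hα : ∀ n, 1 ≤ n → α n ∈ Set.Ioo (0 : ℝ) 1) (k : ℕ) :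
    0 ≤ 1 - α k := by
  cases k with
  | zero => rw [hα0]; norm_num
  | succ k => linarith [(hα (k+1) (Nat.succ_le_succ (Nat.zero_le _))).2]

lemma kmPi_nonneg (hα0 : α 0 = 1) (hα : ∀ n, 1 ≤ n → α n ∈ Set.Ioo (0 : ℝ) 1) (i n : ℕ) :
    0 ≤ kmPi α i n :=
  mul_nonneg (alpha_nonneg hα0 hα i)
    (Finset.prod_nonneg fun k _ => one_sub_alpha_nonneg hα0 hα k)

lemma kmPi_bridge {j m n : ℕ} (hjm : j ≤ m) (hmn : m ≤ n) :
    kmPi α j n = kmPi α j m * ∏ k ∈ Icc (m + 1) n, (1 - α k) := by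
  unfold kmPi
  rw [mul_assoc, Finset.Icc_add_one_left_eq_Ioc, Finset.Icc_add_one_left_eq_Ioc, Finset.Icc_add_one_left_eq_Ioc,
    Finset.prod_Ioc_consecutive _ hjm hmn]

lemma kmPi_diag (n : ℕ) : kmPi α n n = α n := by
  simp [kmPi]

lemma kmPi_sum (hα0 : α 0 = 1) : ∀ n, ∑ i ∈ range (n + 1), kmPi α i n = 1 := by
  intro n
  induction n with
  | zero => simp [kmPi, hα0]
  | succ n ih =>
    rw [Finset.sum_range_succ, kmPi_diag]
    have : ∀ i ∈ range (n + 1), kmPi α i (n + 1) = kmPi α i n * (1 - α (n + 1)) := by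
      intro i hi
      rw [kmPi_bridge (Nat.lt_succ_iff.mp (mem_range.mp hi)) (Nat.le_succ n)]
      simp
    rw [Finset.sum_congr rfl this, ← Finset.sum_mul, ih]
    ring

lemma kmPi_tail (hα0 : α 0 = 1) {m n : ℕ} (hmn : m ≤ n) :
    ∑ j ∈ Ioc m n, kmPi α j n = 1 - ∏ k ∈ Icc (m + 1) n, (1 - α k) := by
  have hsplit : ∑ j ∈ range (m + 1), kmPi α j n + ∑ j ∈ Ioc m n, kmPi α j n = 1 := by
    rw [← kmPi_sum hα0 n]
    simp only [range_eq_Ico]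
    rw [← Finset.Ico_add_one_add_one_eq_Ioc]
    exact Finset.sum_Ico_consecutive _ (Nat.zero_le _) (Nat.succ_le_succ hmn)
  have hhead : ∑ j ∈ range (m + 1), kmPi α j n
      = ∏ k ∈ Icc (m + 1) n, (1 - α k) := by
    have : ∀ j ∈ range (m + 1), kmPi α j n
        = kmPi α j m * ∏ k ∈ Icc (m + 1) n, (1 - α k) := fun j hj =>
      kmPi_bridge (Nat.lt_succ_iff.mp (mem_range.mp hj)) hmn
    rw [Finset.sum_congr rfl this, ← Finset.sum_mul, kmPi_sum hα0, one_mul]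
  linarith

end aux

lemma ztilde_isPlan (α : ℕ → ℝ) (hα0 : α 0 = 1)
    (hα : ∀ n, 1 ≤ n → α n ∈ Set.Ioo (0 : ℝ) 1) {m n : ℕ} (hmn : m ≤ n) :
    IsPlan α m n (ztilde α m n) := by
  refine ⟨?_, ?_, ?_⟩
  · intro i hi j hj
    unfold ztilde
    split_ifs
    · exact kmPi_nonneg hα0 hα _ _
    · exact mul_nonneg (kmPi_nonneg hα0 hα _ _) (kmPi_nonneg hα0 hα _ _)
    · exact le_refl 0
  · intro i hi
    have hsplit : ∑ j ∈ range (n + 1), ztilde α m n i j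
        = ∑ j ∈ range (m + 1), ztilde α m n i j + ∑ j ∈ Ioc m n, ztilde α m n i j := by
      simp only [range_eq_Ico]
      rw [← Finset.Ico_add_one_add_one_eq_Ioc]
      exact (Finset.sum_Ico_consecutive _ (Nat.zero_le _) (Nat.succ_le_succ hmn)).symm
    rw [hsplit]
    have h1 : ∑ j ∈ range (m + 1), ztilde α m n i j = kmPi α i n := by
      rw [Finset.sum_eq_single i]
      · simp [ztilde, hi]
      · intro j hj hji
        have hjm : j ≤ m := Nat.lt_succ_iff.mp (mem_range.mp hj)
        have hij : i ≠ j := fun h => hji h.symm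
        simp [ztilde, hij, Nat.not_lt.mpr hjm]
      · intro h
        exact absurd (mem_range.mpr (Nat.lt_succ_of_le hi)) h
    have h2 : ∑ j ∈ Ioc m n, ztilde α m n i j
        = kmPi α i m * ∑ j ∈ Ioc m n, kmPi α j n := by
      rw [Finset.mul_sum]
      refine Finset.sum_congr rfl fun j hj => ?_
      obtain ⟨hmj, hjn⟩ := mem_Ioc.mp hj
      have : i ≠ j := fun h => absurd (h ▸ hmj) (Nat.not_lt.mpr hi)
      simp [ztilde, this, hi, hmj, hjn]
    rw [h1, h2, kmPi_tail hα0 hmn, kmPi_bridge hi hmn]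
    ring
  · intro j hj
    rcases Nat.lt_or_ge m j with hmj | hjm
    · -- m < j : column sum is ∑_i π_i^m π_j^n = π_j^n
      have : ∀ i ∈ range (m + 1), ztilde α m n i j = kmPi α i m * kmPi α j n := by
        intro i hi
        have him : i ≤ m := Nat.lt_succ_iff.mp (mem_range.mp hi)
        have : i ≠ j := fun h => absurd (h ▸ hmj) (Nat.not_lt.mpr him)
        simp [ztilde, this, him, hmj, hj]
      rw [Finset.sum_congr rfl this, ← Finset.sum_mul, kmPi_sum hα0, one_mul]
    · -- j ≤ m : only the diagonal term
      rw [Finset.sum_eq_single j]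
      · simp [ztilde, hjm]
      · intro i hi hij
        simp [ztilde, hij, Nat.not_lt.mpr hjm]
      · intro h
        exact absurd (mem_range.mpr (Nat.lt_succ_of_le hjm)) h

/-- the recursion `c_{mn} = Σ_{ij} z̃^{mn}_{ij} c_{i-1,j-1}` (with the
same boundary values as `d`, indices shifted by one) uses a feasible transport plan
`z̃^{mn}`, and consequently `d_{mn} ≤ c_{mn}` for all `m ≤ n`. -/
theorem km_c_dominates_d (α : ℕ → ℝ) (hα0 : α 0 = 1)
    (hα : ∀ n, 1 ≤ n → α n ∈ Set.Ioo (0 : ℝ) 1)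
    (D : ℕ → ℕ → ℝ) (hD : IsKMDist α D)
    (c : ℕ → ℕ → ℝ) (hc00 : c 0 0 = 0)
    (hc0 : ∀ k : ℕ, c 0 (k + 1) = 1) (hc0' : ∀ k : ℕ, c (k + 1) 0 = 1)
    (hcrec : ∀ m n : ℕ, m ≤ n →
      c (m + 1) (n + 1) = planCost c m n (ztilde α m n)) :
    (∀ m n : ℕ, m ≤ n → IsPlan α m n (ztilde α m n)) ∧
    (∀ m n : ℕ, m ≤ n → D (m + 1) (n + 1) ≤ c (m + 1) (n + 1)) := by
  obtain ⟨hD00, hD0, hD0', hDmin⟩ := hD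
  refine ⟨fun m n hmn => ztilde_isPlan α hα0 hα hmn, ?_⟩
  intro m
  induction m using Nat.strong_induction_on with
  | _ m ih =>
    intro n hmn
    have h1 : D (m + 1) (n + 1) ≤ planCost D m n (ztilde α m n) :=
      (hDmin m n).2 ⟨ztilde α m n, ztilde_isPlan α hα0 hα hmn, rfl⟩
    have h2 : planCost D m n (ztilde α m n) ≤ planCost c m n (ztilde α m n) := by
      unfold planCost
      refine Finset.sum_le_sum fun i hi => Finset.sum_le_sum fun j hj => ?_
      have him : i ≤ m := Nat.lt_succ_iff.mp (mem_range.mp hi)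
      by_cases hz : ztilde α m n i j = 0
      · simp [hz]
      have hDc : D i j ≤ c i j := by
        unfold ztilde at hz
        split_ifs at hz with h h'
        · -- i = j ≤ m
          obtain ⟨rfl, hiim⟩ := h
          cases i with
          | zero => rw [hD00, hc00]
          | succ k => exact ih k (by omega) k le_rfl
        · -- i ≤ m < j ≤ n
          obtain ⟨him', hmj, hjn⟩ := h'
          obtain ⟨j', rfl⟩ := Nat.exists_eq_add_of_lt (Nat.lt_of_le_of_lt (Nat.zero_le m) hmj)
          cases i with
          | zero => rw [hD0, hc0]
          | succ k =>
            have hk : k ≤ 0 + j' := by omega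
            exact ih k (by omega) (0 + j') hk
        · exact absurd rfl hz
      have hznn : 0 ≤ ztilde α m n i j := by
        unfold ztilde
        split_ifs
        · exact kmPi_nonneg hα0 hα _ _
        · exact mul_nonneg (kmPi_nonneg hα0 hα _ _) (kmPi_nonneg hα0 hα _ _)
        · exact le_refl 0
      exact mul_le_mul_of_nonneg_left hDc hznn
    rw [hcrec m n hmn]
    exact le_trans h1 h2
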